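/- Let X and Y be real-valued integrable random variables on a probability space (Ω, F, P) and let α ∈ (0,1). Then AVaR_α(X + Y) ≤ AVaR_α(X) + AVaR_α(Y) (subadditivity of the Average-Value-at-Risk). -/

import Mathlib

open MeasureTheory

/-- Value-at-Risk of `X` at level `t`: `VaR_t(X) = inf { x : P(X ≤ x) ≥ t }`. -/
noncomputable def VaR {Ω : Type*} [MeasurableSpace Ω] (P : Measure Ω) (t : ℝ)
    (X : Ω → ℝ) : ℝ :=
  sInf {x : ℝ | t ≤ (P {ω | X ω ≤ x}).toReal}

/-- Average-Value-at-Risk of `X` at level `α`: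
`AVaR_α(X) = (1/(1-α)) ∫_α^1 VaR_t(X) dt`. -/
noncomputable def AVaR {Ω : Type*} [MeasurableSpace Ω] (P : Measure Ω) (α : ℝ)
    (X : Ω → ℝ) : ℝ :=
  (1 - α)⁻¹ * ∫ t in α..1, VaR P t X

open ProbabilityTheory Set Filter

set_option linter.unusedSectionVars false


namespace AVaRAux

noncomputable def Qf (μ : Measure ℝ) (t : ℝ) : ℝ :=
  sInf {x : ℝ | t ≤ cdf μ x}

variable (μ : Measure ℝ) [IsProbabilityMeasure μ]

lemma nonempty_S {t : ℝ} (ht : t < 1) : {x : ℝ | t ≤ cdf μ x}.Nonempty :=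
  ((tendsto_cdf_atTop μ).eventually (eventually_ge_nhds ht)).exists

lemma bdd_S {t : ℝ} (ht : 0 < t) : BddBelow {x : ℝ | t ≤ cdf μ x} := by
  obtain ⟨x0, hx0⟩ := ((tendsto_cdf_atBot μ).eventually (eventually_lt_nhds ht)).exists
  refine ⟨x0, fun y hy => le_of_not_gt fun h => ?_⟩
  exact absurd hy (not_le.2 (lt_of_le_of_lt (monotone_cdf μ h.le) hx0))

lemma le_cdf_Q {t : ℝ} (ht : t ∈ Ioo (0:ℝ) 1) : t ≤ cdf μ (Qf μ t) := by
  have hne := nonempty_S μ ht.2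
  have hbd := bdd_S μ ht.1
  have hcont : ContinuousWithinAt (cdf μ) (Ioi (Qf μ t)) (Qf μ t) :=
    ((cdf μ).right_continuous _).mono Ioi_subset_Ici_self
  refine ge_of_tendsto hcont ?_
  filter_upwards [self_mem_nhdsWithin] with x hx
  obtain ⟨y, hy, hyx⟩ := exists_lt_of_csInf_lt hne hx
  exact le_trans hy (monotone_cdf μ hyx.le)

lemma galois {t : ℝ} (ht : t ∈ Ioo (0:ℝ) 1) (x : ℝ) :
    Qf μ t ≤ x ↔ t ≤ cdf μ x :=
  ⟨fun h => (le_cdf_Q μ ht).trans (monotone_cdf μ h),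
   fun h => csInf_le (bdd_S μ ht.1) h⟩

lemma Q_mono {s t : ℝ} (hs : s ∈ Ioo (0:ℝ) 1) (ht : t ∈ Ioo (0:ℝ) 1) (h : s ≤ t) :
    Qf μ s ≤ Qf μ t :=
  (galois μ hs _).2 (h.trans (le_cdf_Q μ ht))

lemma measure_Ioi_eq (y : ℝ) : μ (Ioi y) = ENNReal.ofReal (1 - cdf μ y) := by
  have h1 : μ (Ioi y) = 1 - μ (Iic y) := by
    rw [← compl_Iic, measure_compl measurableSet_Iic (measure_ne_top μ _), measure_univ]
  rw [h1, ENNReal.ofReal_sub _ (cdf_nonneg μ y), ENNReal.ofReal_one, ofReal_cdf]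

variable {α : ℝ}

lemma meas_ind (hα : α ∈ Ioo (0:ℝ) 1) : Measurable ((Ioo α 1).indicator (Qf μ)) := by
  apply measurable_of_Iic
  intro x
  have hset : ((Ioo α 1).indicator (Qf μ)) ⁻¹' Iic x
      = (Ioo α 1 ∩ Iic (cdf μ x)) ∪ ((Ioo α 1)ᶜ ∩ {_t : ℝ | (0:ℝ) ≤ x}) := by
    ext t
    by_cases ht : t ∈ Ioo α 1
    · have ht' : t ∈ Ioo (0:ℝ) 1 := ⟨hα.1.trans ht.1, ht.2⟩
      simp only [mem_preimage, indicator_of_mem ht, mem_Iic, mem_union, mem_inter_iff, ht,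
        mem_compl_iff, not_true, false_and, or_false, true_and, mem_setOf_eq]
      exact galois μ ht' x
    · simp only [mem_preimage, indicator_of_notMem ht, mem_Iic, mem_union, mem_inter_iff, ht,
        false_and, false_or, mem_compl_iff, not_false_iff, true_and, mem_setOf_eq]
  rw [hset]
  exact (measurableSet_Ioo.inter measurableSet_Iic).union
    (measurableSet_Ioo.compl.inter (MeasurableSet.const _))

lemma ae_mem_Ioo (hα : α ∈ Ioo (0:ℝ) 1) :
    ∀ᵐ t ∂(volume.restrict (Ioc α 1)), t ∈ Ioo α 1 := by
  have h1 : ∀ᵐ t ∂(volume : Measure ℝ), t ≠ 1 := by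
    rw [ae_iff]
    have : {t : ℝ | ¬ t ≠ 1} = {1} := by ext t; simp
    rw [this]
    exact Real.volume_singleton
  filter_upwards [ae_restrict_mem measurableSet_Ioc, ae_restrict_of_ae h1] with t ht hne
  exact ⟨ht.1, lt_of_le_of_ne ht.2 hne⟩

lemma aemeas_Q (hα : α ∈ Ioo (0:ℝ) 1) :
    AEMeasurable (Qf μ) (volume.restrict (Ioc α 1)) := by
  refine ⟨(Ioo α 1).indicator (Qf μ), meas_ind μ hα, ?_⟩
  filter_upwards [ae_mem_Ioo hα] with t ht
  exact (indicator_of_mem ht _).symm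

lemma lint_t (hα : α ∈ Ioo (0:ℝ) 1) (c : ℝ) :
    ∫⁻ t in Ioc α 1, ENNReal.ofReal (max (Qf μ t - c) 0)
      = ∫⁻ s in Ioi (0:ℝ), ENNReal.ofReal (1 - max α (cdf μ (c + s))) := by
  rw [lintegral_eq_lintegral_meas_lt (f := fun t => max (Qf μ t - c) 0) _
    (ae_of_all _ fun t => le_max_right _ _)
    (((aemeas_Q μ hα).sub aemeasurable_const).max aemeasurable_const)]
  refine setLIntegral_congr_fun measurableSet_Ioi (fun s hs => ?_)
  have hs0 : (0:ℝ) < s := hs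
  rw [Measure.restrict_apply' measurableSet_Ioc]
  set m := max α (cdf μ (c + s)) with hm
  have hsub1 : Ioo m 1 ⊆ {t : ℝ | s < max (Qf μ t - c) 0} ∩ Ioc α 1 := by
    intro t ht
    have htα : α < t := lt_of_le_of_lt (le_max_left _ _) ht.1
    have ht' : t ∈ Ioo (0:ℝ) 1 := ⟨hα.1.trans htα, ht.2⟩
    have hF : cdf μ (c + s) < t := lt_of_le_of_lt (le_max_right _ _) ht.1
    have hQ : c + s < Qf μ t := by
      by_contra h
      exact absurd ((galois μ ht' (c + s)).1 (not_lt.1 h)) (not_le.2 hF)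
    have h2 : s < max (Qf μ t - c) 0 := lt_max_iff.2 (Or.inl (by linarith))
    exact ⟨h2, htα, ht.2.le⟩
  have hsub2 : {t : ℝ | s < max (Qf μ t - c) 0} ∩ Ioc α 1 ⊆ Ioo m 1 ∪ {1} := by
    rintro t ⟨hts, htα, ht1⟩
    rcases eq_or_lt_of_le ht1 with h1 | h1
    · exact Or.inr (by simp [h1])
    · have ht' : t ∈ Ioo (0:ℝ) 1 := ⟨hα.1.trans htα, h1⟩
      have hts' : s < max (Qf μ t - c) 0 := hts
      have hQ : s < Qf μ t - c := by
        rcases lt_max_iff.1 hts' with h | h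
        · exact h
        · linarith
      have hF : cdf μ (c + s) < t := by
        by_contra h
        have := (galois μ ht' (c + s)).2 (not_lt.1 h)
        linarith
      exact Or.inl ⟨max_lt htα hF, h1⟩
  have hv : volume ({t : ℝ | s < max (Qf μ t - c) 0} ∩ Ioc α 1) = volume (Ioo m 1) := by
    refine le_antisymm ((measure_mono hsub2).trans ?_) (measure_mono hsub1)
    calc volume (Ioo m 1 ∪ {1}) ≤ volume (Ioo m 1) + volume ({1} : Set ℝ) := measure_union_le _ _
    _ = volume (Ioo m 1) := by rw [Real.volume_singleton, add_zero]
  rw [hv, Real.volume_Ioo]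

lemma lint_x (c : ℝ) :
    ∫⁻ x, ENNReal.ofReal (max (x - c) 0) ∂μ
      = ∫⁻ s in Ioi (0:ℝ), ENNReal.ofReal (1 - cdf μ (c + s)) := by
  rw [lintegral_eq_lintegral_meas_lt (f := fun x => max (x - c) 0) μ
    (ae_of_all _ fun t => le_max_right _ _)
    (((measurable_id.sub measurable_const).max measurable_const).aemeasurable)]
  refine setLIntegral_congr_fun measurableSet_Ioi (fun s hs => ?_)
  have hs0 : (0:ℝ) < s := hs
  have hset : {x : ℝ | s < max (x - c) 0} = Ioi (c + s) := by
    ext x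
    simp only [mem_setOf_eq, lt_max_iff, mem_Ioi]
    constructor
    · rintro (h | h)
      · linarith
      · linarith
    · intro h; exact Or.inl (by linarith)
  rw [hset, measure_Ioi_eq]

lemma ofReal_e {c : ℝ} (hint : Integrable (fun x => max (x - c) 0) μ) :
    ∫⁻ x, ENNReal.ofReal (max (x - c) 0) ∂μ
      = ENNReal.ofReal (∫ x, max (x - c) 0 ∂μ) :=
  (ofReal_integral_eq_lintegral_ofReal hint (ae_of_all _ fun x => le_max_right _ _)).symm

lemma lint_le (hα : α ∈ Ioo (0:ℝ) 1) {c : ℝ} (hint : Integrable (fun x => max (x - c) 0) μ) :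
    ∫⁻ t in Ioc α 1, ENNReal.ofReal (max (Qf μ t - c) 0)
      ≤ ENNReal.ofReal (∫ x, max (x - c) 0 ∂μ) := by
  rw [lint_t μ hα c, ← ofReal_e μ hint, lint_x μ c]
  refine lintegral_mono fun s => ENNReal.ofReal_le_ofReal ?_
  have := le_max_right α (cdf μ (c + s))
  linarith

lemma lint_eq (hα : α ∈ Ioo (0:ℝ) 1)
    (hint : Integrable (fun x => max (x - Qf μ α) 0) μ) :
    ∫⁻ t in Ioc α 1, ENNReal.ofReal (max (Qf μ t - Qf μ α) 0)
      = ENNReal.ofReal (∫ x, max (x - Qf μ α) 0 ∂μ) := by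
  rw [lint_t μ hα _, ← ofReal_e μ hint, lint_x μ _]
  refine setLIntegral_congr_fun measurableSet_Ioi (fun s hs => ?_)
  have hs0 : (0:ℝ) < s := hs
  have hle : α ≤ cdf μ (Qf μ α + s) :=
    (le_cdf_Q μ hα).trans (monotone_cdf μ (le_add_of_nonneg_right hs0.le))
  rw [max_eq_right hle]

variable {μ} in
lemma int_max (hid : Integrable (fun x => x) μ) (c : ℝ) :
    Integrable (fun x => max (x - c) 0) μ :=
  (hid.sub (integrable_const c)).sup (integrable_const 0)

lemma g_intOn (hα : α ∈ Ioo (0:ℝ) 1) (hid : Integrable (fun x => x) μ) (c : ℝ) :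
    IntegrableOn (fun t => max (Qf μ t - c) 0) (Ioc α 1) volume := by
  have hmeas : AEMeasurable (fun t => max (Qf μ t - c) 0) (volume.restrict (Ioc α 1)) :=
    ((aemeas_Q μ hα).sub aemeasurable_const).max aemeasurable_const
  refine ⟨hmeas.aestronglyMeasurable, ?_⟩
  rw [hasFiniteIntegral_iff_ofReal (f := fun t => max (Qf μ t - c) 0)
    (ae_of_all _ fun t => le_max_right _ _)]
  exact lt_of_le_of_lt (lint_le μ hα (int_max hid c)) ENNReal.ofReal_lt_top

lemma g_integral_le (hα : α ∈ Ioo (0:ℝ) 1) (hid : Integrable (fun x => x) μ) (c : ℝ) :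
    ∫ t in Ioc α 1, max (Qf μ t - c) 0 ≤ ∫ x, max (x - c) 0 ∂μ := by
  have hmeas : AEMeasurable (fun t => max (Qf μ t - c) 0) (volume.restrict (Ioc α 1)) :=
    ((aemeas_Q μ hα).sub aemeasurable_const).max aemeasurable_const
  rw [integral_eq_lintegral_of_nonneg_ae (f := fun t => max (Qf μ t - c) 0)
    (ae_of_all _ fun t => le_max_right _ _) hmeas.aestronglyMeasurable]
  have h1 := lint_le μ hα (int_max hid c)
  have h2 : (0:ℝ) ≤ ∫ x, max (x - c) 0 ∂μ :=
    integral_nonneg fun x => le_max_right _ _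
  calc (∫⁻ t in Ioc α 1, ENNReal.ofReal (max (Qf μ t - c) 0)).toReal
      ≤ (ENNReal.ofReal (∫ x, max (x - c) 0 ∂μ)).toReal :=
        ENNReal.toReal_mono ENNReal.ofReal_ne_top h1
    _ = ∫ x, max (x - c) 0 ∂μ := ENNReal.toReal_ofReal h2

lemma g_integral_eq (hα : α ∈ Ioo (0:ℝ) 1) (hid : Integrable (fun x => x) μ) :
    ∫ t in Ioc α 1, max (Qf μ t - Qf μ α) 0 = ∫ x, max (x - Qf μ α) 0 ∂μ := by
  have hmeas : AEMeasurable (fun t => max (Qf μ t - Qf μ α) 0) (volume.restrict (Ioc α 1)) :=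
    ((aemeas_Q μ hα).sub aemeasurable_const).max aemeasurable_const
  rw [integral_eq_lintegral_of_nonneg_ae (f := fun t => max (Qf μ t - Qf μ α) 0)
    (ae_of_all _ fun t => le_max_right _ _) hmeas.aestronglyMeasurable]
  rw [lint_eq μ hα (int_max hid _)]
  exact ENNReal.toReal_ofReal (integral_nonneg fun x => le_max_right _ _)

lemma Q_intOn (hα : α ∈ Ioo (0:ℝ) 1) (hid : Integrable (fun x => x) μ) :
    IntegrableOn (Qf μ) (Ioc α 1) volume := by
  set a := Qf μ α with ha
  refine Integrable.mono' ((integrable_const (|a| + |a|)).add (g_intOn μ hα hid a))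
    (aemeas_Q μ hα).aestronglyMeasurable ?_
  filter_upwards [ae_mem_Ioo hα] with t ht
  have ht' : t ∈ Ioo (0:ℝ) 1 := ⟨hα.1.trans ht.1, ht.2⟩
  have hge : a ≤ Qf μ t := Q_mono μ hα ht' ht.1.le
  have hle : Qf μ t ≤ a + max (Qf μ t - a) 0 := by
    have := le_max_left (Qf μ t - a) 0
    linarith
  rw [Real.norm_eq_abs, abs_le]
  simp only [Pi.add_apply]
  have habs : (0:ℝ) ≤ |a| := abs_nonneg a
  have h0 : 0 ≤ max (Qf μ t - a) 0 := le_max_right _ _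
  constructor
  · have : -|a| ≤ a := neg_abs_le a
    linarith
  · have : a ≤ |a| := le_abs_self a
    linarith

lemma Q_integral_le (hα : α ∈ Ioo (0:ℝ) 1) (hid : Integrable (fun x => x) μ) (c : ℝ) :
    ∫ t in Ioc α 1, Qf μ t ≤ (1 - α) * c + ∫ x, max (x - c) 0 ∂μ := by
  have hIoc : (volume (Ioc α 1)).toReal = 1 - α := by
    rw [Real.volume_Ioc, ENNReal.toReal_ofReal (by linarith [hα.2])]
  have step1 : ∫ t in Ioc α 1, Qf μ t ≤ ∫ t in Ioc α 1, (c + max (Qf μ t - c) 0) := by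
    refine integral_mono (Q_intOn μ hα hid) ((integrable_const c).add (g_intOn μ hα hid c))
      fun t => ?_
    have := le_max_left (Qf μ t - c) 0
    simp only [Pi.add_apply]
    linarith
  have step2 : ∫ t in Ioc α 1, (c + max (Qf μ t - c) 0)
      = (1 - α) * c + ∫ t in Ioc α 1, max (Qf μ t - c) 0 := by
    rw [integral_add (integrable_const c) (g_intOn μ hα hid c), setIntegral_const, measureReal_def, hIoc,
      smul_eq_mul]
  calc ∫ t in Ioc α 1, Qf μ t ≤ (1 - α) * c + ∫ t in Ioc α 1, max (Qf μ t - c) 0 := by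
        rw [← step2]; exact step1
    _ ≤ (1 - α) * c + ∫ x, max (x - c) 0 ∂μ := by
        linarith [g_integral_le μ hα hid c]

lemma Q_integral_eq (hα : α ∈ Ioo (0:ℝ) 1) (hid : Integrable (fun x => x) μ) :
    ∫ t in Ioc α 1, Qf μ t = (1 - α) * Qf μ α + ∫ x, max (x - Qf μ α) 0 ∂μ := by
  set a := Qf μ α with ha
  have hIoc : (volume (Ioc α 1)).toReal = 1 - α := by
    rw [Real.volume_Ioc, ENNReal.toReal_ofReal (by linarith [hα.2])]
  have step0 : ∫ t in Ioc α 1, Qf μ t = ∫ t in Ioc α 1, (a + max (Qf μ t - a) 0) := by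
    refine integral_congr_ae ?_
    filter_upwards [ae_mem_Ioo hα] with t ht
    have ht' : t ∈ Ioo (0:ℝ) 1 := ⟨hα.1.trans ht.1, ht.2⟩
    have hge : a ≤ Qf μ t := Q_mono μ hα ht' ht.1.le
    rw [max_eq_left (by linarith)]
    ring
  rw [step0, integral_add (integrable_const a) (g_intOn μ hα hid a), setIntegral_const, measureReal_def, hIoc,
    smul_eq_mul, g_integral_eq μ hα hid]

end AVaRAux

open AVaRAux

/-- Subadditivity of the Average-Value-at-Risk:
`AVaR_α(X + Y) ≤ AVaR_α(X) + AVaR_α(Y)`. -/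
theorem avar_subadditive
    {Ω : Type*} [MeasurableSpace Ω] (P : Measure Ω) [IsProbabilityMeasure P]
    (X Y : Ω → ℝ) (hX : Integrable X P) (hY : Integrable Y P)
    (α : ℝ) (hα : α ∈ Set.Ioo (0 : ℝ) 1) :
    AVaR P α (fun ω => X ω + Y ω) ≤ AVaR P α X + AVaR P α Y := by
  classical
  -- measurable representatives
  set X' := hX.1.mk X with hX'def
  set Y' := hY.1.mk Y with hY'def
  have hX'meas : Measurable X' := hX.1.stronglyMeasurable_mk.measurable
  have hY'meas : Measurable Y' := hY.1.stronglyMeasurable_mk.measurable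
  have hXX' : X =ᵐ[P] X' := hX.1.ae_eq_mk
  have hYY' : Y =ᵐ[P] Y' := hY.1.ae_eq_mk
  have hX'int : Integrable X' P := hX.congr hXX'
  have hY'int : Integrable Y' P := hY.congr hYY'
  set Z' : Ω → ℝ := fun ω => X' ω + Y' ω with hZ'def
  have hZ'meas : Measurable Z' := hX'meas.add hY'meas
  have hZZ' : (fun ω => X ω + Y ω) =ᵐ[P] Z' := by
    filter_upwards [hXX', hYY'] with ω h1 h2
    simp [hZ'def, h1, h2]
  have hZ'int : Integrable Z' P := hX'int.add hY'int
  haveI : IsProbabilityMeasure (P.map X') := Measure.isProbabilityMeasure_map hX'meas.aemeasurable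
  haveI : IsProbabilityMeasure (P.map Y') := Measure.isProbabilityMeasure_map hY'meas.aemeasurable
  haveI : IsProbabilityMeasure (P.map Z') := Measure.isProbabilityMeasure_map hZ'meas.aemeasurable
  -- bridge : VaR = quantile of the law
  have hbr : ∀ (W W' : Ω → ℝ), Measurable W' → W =ᵐ[P] W' →
      ∀ t, VaR P t W = Qf (P.map W') t := by
    intro W W' hW'meas hWW' t
    haveI : IsProbabilityMeasure (P.map W') := Measure.isProbabilityMeasure_map hW'meas.aemeasurable
    unfold VaR Qf
    congr 1
    ext x
    have h1 : {ω | W ω ≤ x} =ᵐ[P] {ω | W' ω ≤ x} := by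
      filter_upwards [hWW'] with ω h
      change (W ω ≤ x) = (W' ω ≤ x)
      rw [h]
    have h2 : P {ω | W ω ≤ x} = (P.map W') (Set.Iic x) := by
      rw [measure_congr h1, Measure.map_apply hW'meas measurableSet_Iic]
      rfl
    simp only [Set.mem_setOf_eq, h2, ProbabilityTheory.cdf_eq_real, measureReal_def]
  have hbrX := hbr X X' hX'meas hXX'
  have hbrY := hbr Y Y' hY'meas hYY'
  have hbrZ := hbr (fun ω => X ω + Y ω) Z' hZ'meas hZZ'
  -- integrability of the identity w.r.t. the laws
  have hidX : Integrable (fun x => x) (P.map X') :=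
    (integrable_map_measure aestronglyMeasurable_id hX'meas.aemeasurable).2
      (by simpa [Function.comp] using hX'int)
  have hidY : Integrable (fun x => x) (P.map Y') :=
    (integrable_map_measure aestronglyMeasurable_id hY'meas.aemeasurable).2
      (by simpa [Function.comp] using hY'int)
  have hidZ : Integrable (fun x => x) (P.map Z') :=
    (integrable_map_measure aestronglyMeasurable_id hZ'meas.aemeasurable).2
      (by simpa [Function.comp] using hZ'int)
  set a := Qf (P.map X') α with hadef
  set b := Qf (P.map Y') α with hbdef
  -- transfer of expectations to P
  have hmap : ∀ (W' : Ω → ℝ), Measurable W' → ∀ c : ℝ,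
      ∫ x, max (x - c) 0 ∂(P.map W') = ∫ ω, max (W' ω - c) 0 ∂P := by
    intro W' hW'meas c
    exact integral_map hW'meas.aemeasurable
      (((continuous_id.sub continuous_const).max continuous_const).aestronglyMeasurable)
  -- pointwise subadditivity of positive parts
  have intXa : Integrable (fun ω => max (X' ω - a) 0) P :=
    (hX'int.sub (integrable_const a)).sup (integrable_const 0)
  have intYb : Integrable (fun ω => max (Y' ω - b) 0) P :=
    (hY'int.sub (integrable_const b)).sup (integrable_const 0)
  have intZab : Integrable (fun ω => max (Z' ω - (a + b)) 0) P :=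
    (hZ'int.sub (integrable_const (a + b))).sup (integrable_const 0)
  have key : ∫ ω, max (Z' ω - (a + b)) 0 ∂P
      ≤ (∫ ω, max (X' ω - a) 0 ∂P) + ∫ ω, max (Y' ω - b) 0 ∂P := by
    rw [← integral_add intXa intYb]
    refine integral_mono intZab (intXa.add intYb) fun ω => ?_
    simp only [Pi.add_apply]
    refine max_le ?_ (add_nonneg (le_max_right _ _) (le_max_right _ _))
    have h1 : X' ω - a ≤ max (X' ω - a) 0 := le_max_left _ _
    have h2 : Y' ω - b ≤ max (Y' ω - b) 0 := le_max_left _ _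
    simp only [hZ'def]
    linarith
  -- the three integrals over (α, 1]
  have hIz : ∫ t in Set.Ioc α 1, Qf (P.map Z') t
      ≤ (1 - α) * (a + b) + ∫ x, max (x - (a + b)) 0 ∂(P.map Z') :=
    Q_integral_le (P.map Z') hα hidZ (a + b)
  have hIx : ∫ t in Set.Ioc α 1, Qf (P.map X') t
      = (1 - α) * a + ∫ x, max (x - a) 0 ∂(P.map X') :=
    Q_integral_eq (P.map X') hα hidX
  have hIy : ∫ t in Set.Ioc α 1, Qf (P.map Y') t
      = (1 - α) * b + ∫ x, max (x - b) 0 ∂(P.map Y') :=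
    Q_integral_eq (P.map Y') hα hidY
  have hfinal : ∫ t in Set.Ioc α 1, Qf (P.map Z') t
      ≤ (∫ t in Set.Ioc α 1, Qf (P.map X') t) + ∫ t in Set.Ioc α 1, Qf (P.map Y') t := by
    rw [hIx, hIy, hmap X' hX'meas a, hmap Y' hY'meas b]
    have := hmap Z' hZ'meas (a + b)
    rw [this] at hIz
    calc ∫ t in Set.Ioc α 1, Qf (P.map Z') t
        ≤ (1 - α) * (a + b) + ∫ ω, max (Z' ω - (a + b)) 0 ∂P := hIz
      _ ≤ (1 - α) * (a + b) + ((∫ ω, max (X' ω - a) 0 ∂P) + ∫ ω, max (Y' ω - b) 0 ∂P) := by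
          linarith
      _ = (1 - α) * a + (∫ ω, max (X' ω - a) 0 ∂P)
          + ((1 - α) * b + ∫ ω, max (Y' ω - b) 0 ∂P) := by ring
  -- conclude
  unfold AVaR
  rw [intervalIntegral.integral_of_le hα.2.le, intervalIntegral.integral_of_le hα.2.le,
    intervalIntegral.integral_of_le hα.2.le]
  simp only [hbrX, hbrY, hbrZ]
  rw [← mul_add]
  exact mul_le_mul_of_nonneg_left hfinal (inv_nonneg.2 (by linarith [hα.2]))
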